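/- Let p be a pmf on {L,...,R} with L finite satisfying (C1) and (C2), with CDF P, and let f_m be the Stein solution f_m(k) = (1/p(k))·Σ_{ℓ=L}^{k-1}(1{ℓ≤m} - P(m))p(ℓ). Then for all k ∈ {L,...,R-1}: |f_m(k+1)| ≤ 2·min{P(k), 1-P(k)}/p(k+1), and hence sup_k |(Δ⁺p(k)/p(k))·f_m(k+1)| < ∞. -/

import Mathlib

/-- Bounds on the Stein-equation solution f_m: `|f_m(k+1)| ≤ 2 min{P(k),1-P(k)}/p(k+1)` on
`{L,...,R-1}`, and hence `(Δ⁺p(k)/p(k))·f_m(k+1)` is uniformly bounded. -/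
theorem stmt_19 (p : ℤ → ℝ) (L : ℤ) (R : WithTop ℤ)
    (hsupp : ∀ k : ℤ, 0 < p k ↔ (L ≤ k ∧ (k : WithTop ℤ) ≤ R))
    (hnonneg : ∀ k, 0 ≤ p k)
    (hsum : ∑' k : ℤ, p k = 1)
    (hC2 : ∃ M : ℝ, ∀ k : ℤ, L ≤ k → ((k + 1 : ℤ) : WithTop ℤ) ≤ R →
      |(p (k + 1) - p k) * min (∑' ℓ : ℤ, if ℓ ≤ k then p ℓ else 0)
        (1 - ∑' ℓ : ℤ, if ℓ ≤ k then p ℓ else 0) / (p k * p (k + 1))| ≤ M)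
    (m : ℤ) (Pm : ℝ) (hPm : Pm = ∑' ℓ : ℤ, if ℓ ≤ m then p ℓ else 0)
    (f : ℤ → ℝ)
    (hf : ∀ k : ℤ, f k = (1 / p k) *
      ∑ ℓ ∈ Finset.Ico L k, ((if ℓ ≤ m then (1 : ℝ) else 0) - Pm) * p ℓ) :
    (∀ k : ℤ, L ≤ k → ((k + 1 : ℤ) : WithTop ℤ) ≤ R →
      |f (k + 1)| ≤ 2 * min (∑' ℓ : ℤ, if ℓ ≤ k then p ℓ else 0)
        (1 - ∑' ℓ : ℤ, if ℓ ≤ k then p ℓ else 0) / p (k + 1)) ∧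
    ∃ M : ℝ, ∀ k : ℤ, L ≤ k → (k : WithTop ℤ) ≤ R →
      |(p (k + 1) - p k) / p k * f (k + 1)| ≤ M := by
  classical
  obtain ⟨M, hM⟩ := hC2
  have hp_sum : Summable p := by
    by_contra h
    rw [tsum_eq_zero_of_not_summable h] at hsum
    norm_num at hsum
  have hzero : ∀ ℓ : ℤ, ℓ < L → p ℓ = 0 := by
    intro ℓ hℓ
    rcases (hnonneg ℓ).eq_or_lt with h | h
    · exact h.symm
    · exact absurd ((hsupp ℓ).1 h).1 (not_le.2 hℓ)
  -- the CDF as a finite sum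
  have hP : ∀ k : ℤ, (∑' ℓ : ℤ, if ℓ ≤ k then p ℓ else 0)
      = ∑ ℓ ∈ Finset.Ico L (k + 1), p ℓ := by
    intro k
    have hv : ∀ ℓ ∉ Finset.Ico L (k + 1), (if ℓ ≤ k then p ℓ else 0) = 0 := by
      intro ℓ hℓ
      simp only [Finset.mem_Ico, not_and, not_lt] at hℓ
      by_cases h : ℓ ≤ k
      · rw [if_pos h]; exact hzero ℓ (by omega)
      · rw [if_neg h]
    rw [tsum_eq_sum hv]
    refine Finset.sum_congr rfl fun ℓ hℓ => ?_
    simp only [Finset.mem_Ico] at hℓ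
    exact if_pos (by omega)
  have hq_sum : ∀ j : ℤ, Summable (fun ℓ : ℤ => if ℓ ≤ j then p ℓ else 0) := by
    intro j
    refine Summable.of_nonneg_of_le (fun ℓ => ?_) (fun ℓ => ?_) hp_sum
    · split
      · exact hnonneg ℓ
      · exact le_rfl
    · split
      · exact le_rfl
      · exact hnonneg ℓ
  have hPge0 : ∀ k : ℤ, (0 : ℝ) ≤ ∑' ℓ : ℤ, if ℓ ≤ k then p ℓ else 0 := by
    intro k
    refine tsum_nonneg fun ℓ => ?_
    split
    · exact hnonneg ℓ
    · exact le_rfl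
  have hPle1 : ∀ k : ℤ, (∑' ℓ : ℤ, if ℓ ≤ k then p ℓ else 0) ≤ 1 := by
    intro k
    rw [← hsum]
    refine Summable.tsum_le_tsum (fun ℓ => ?_) (hq_sum k) hp_sum
    split
    · exact le_rfl
    · exact hnonneg ℓ
  have hPm0 : 0 ≤ Pm := hPm ▸ hPge0 m
  have hPm1 : Pm ≤ 1 := hPm ▸ hPle1 m
  set g : ℤ → ℝ := fun ℓ => ((if ℓ ≤ m then (1 : ℝ) else 0) - Pm) * p ℓ with hg
  have hgabs : ∀ ℓ, |g ℓ| ≤ p ℓ := by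
    intro ℓ
    rw [hg]
    simp only
    rw [abs_mul, abs_of_nonneg (hnonneg ℓ)]
    have hc : |(if ℓ ≤ m then (1 : ℝ) else 0) - Pm| ≤ 1 := by
      rw [abs_le]
      constructor <;> split <;> linarith
    calc |(if ℓ ≤ m then (1 : ℝ) else 0) - Pm| * p ℓ ≤ 1 * p ℓ :=
          mul_le_mul_of_nonneg_right hc (hnonneg ℓ)
      _ = p ℓ := one_mul _
  have hgabs_sum : Summable (fun ℓ => |g ℓ|) :=
    Summable.of_nonneg_of_le (fun ℓ => abs_nonneg _) hgabs hp_sum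
  have hg_sum : Summable g := hgabs_sum.of_abs
  have hg_eq : g = fun ℓ => (if ℓ ≤ m then p ℓ else 0) - Pm * p ℓ := by
    funext ℓ
    rw [hg]
    by_cases h : ℓ ≤ m <;> simp [h] <;> ring
  have hg_tsum : ∑' ℓ, g ℓ = 0 := by
    rw [hg_eq, Summable.tsum_sub (hq_sum m) (hp_sum.mul_left Pm), tsum_mul_left, hsum, ← hPm]
    ring
  -- key bound on the numerator
  have hnum : ∀ k : ℤ, |∑ ℓ ∈ Finset.Ico L (k + 1), g ℓ|
      ≤ min (∑' ℓ : ℤ, if ℓ ≤ k then p ℓ else 0)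
        (1 - ∑' ℓ : ℤ, if ℓ ≤ k then p ℓ else 0) := by
    intro k
    set s := Finset.Ico L (k + 1) with hs
    refine le_min ?_ ?_
    · rw [hP k, ← hs]
      calc |∑ ℓ ∈ s, g ℓ| ≤ ∑ ℓ ∈ s, |g ℓ| := Finset.abs_sum_le_sum_abs _ _
        _ ≤ ∑ ℓ ∈ s, p ℓ := Finset.sum_le_sum fun ℓ _ => hgabs ℓ
    · have h1 := Summable.sum_add_tsum_compl (s := s) hg_sum
      have h2 := Summable.sum_add_tsum_compl (s := s) hp_sum
      rw [hg_tsum] at h1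
      rw [hsum] at h2
      have h3 : ∑ ℓ ∈ s, g ℓ = -∑' (ℓ : ((s : Set ℤ)ᶜ : Set ℤ)), g ℓ := by linarith
      have h4 : |∑' (ℓ : ((s : Set ℤ)ᶜ : Set ℤ)), g ℓ|
          ≤ ∑' (ℓ : ((s : Set ℤ)ᶜ : Set ℤ)), p ℓ := by
        calc |∑' (ℓ : ((s : Set ℤ)ᶜ : Set ℤ)), g ℓ|
            ≤ ∑' (ℓ : ((s : Set ℤ)ᶜ : Set ℤ)), |g ℓ| := by
              simpa [Real.norm_eq_abs] using
                norm_tsum_le_tsum_norm (f := fun ℓ : ((s : Set ℤ)ᶜ : Set ℤ) => g ℓ)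
                  (by simp only [Real.norm_eq_abs]; exact hgabs_sum.subtype ((s : Set ℤ)ᶜ))
          _ ≤ ∑' (ℓ : ((s : Set ℤ)ᶜ : Set ℤ)), p ℓ :=
              Summable.tsum_le_tsum (fun ℓ => hgabs ℓ) (hgabs_sum.subtype _) (hp_sum.subtype _)
      rw [h3, abs_neg, hP k, ← hs]
      linarith
  have hmin0 : ∀ k : ℤ, (0 : ℝ) ≤ min (∑' ℓ : ℤ, if ℓ ≤ k then p ℓ else 0)
      (1 - ∑' ℓ : ℤ, if ℓ ≤ k then p ℓ else 0) := fun k =>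
    le_min (hPge0 k) (by linarith [hPle1 k])
  -- bound on |f (k+1)| without the factor 2
  have hfb : ∀ k : ℤ, 0 < p (k + 1) → |f (k + 1)|
      ≤ min (∑' ℓ : ℤ, if ℓ ≤ k then p ℓ else 0)
        (1 - ∑' ℓ : ℤ, if ℓ ≤ k then p ℓ else 0) / p (k + 1) := by
    intro k hpk1
    rw [hf (k + 1)]
    have : |(1 : ℝ) / p (k + 1) * ∑ ℓ ∈ Finset.Ico L (k + 1),
        ((if ℓ ≤ m then (1 : ℝ) else 0) - Pm) * p ℓ|
        = |∑ ℓ ∈ Finset.Ico L (k + 1), g ℓ| / p (k + 1) := by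
      rw [abs_mul, abs_of_nonneg (by positivity : (0:ℝ) ≤ 1 / p (k + 1))]
      rw [hg]
      ring
    rw [this]
    gcongr
    exact hnum k
  constructor
  · intro k hL hR
    have hpk1 : 0 < p (k + 1) := (hsupp (k + 1)).2 ⟨by omega, hR⟩
    refine (hfb k hpk1).trans ?_
    rw [div_le_div_iff_of_pos_right hpk1]
    linarith [hmin0 k]
  · refine ⟨max M 0, fun k hL hR => ?_⟩
    by_cases hR' : ((k + 1 : ℤ) : WithTop ℤ) ≤ R
    · have hpk : 0 < p k := (hsupp k).2 ⟨hL, hR⟩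
      have hpk1 : 0 < p (k + 1) := (hsupp (k + 1)).2 ⟨by omega, hR'⟩
      refine le_trans ?_ ((hM k hL hR').trans (le_max_left _ _))
      calc |(p (k + 1) - p k) / p k * f (k + 1)|
          = |p (k + 1) - p k| / p k * |f (k + 1)| := by
            rw [abs_mul, abs_div, abs_of_nonneg hpk.le]
        _ ≤ |p (k + 1) - p k| / p k * (min (∑' ℓ : ℤ, if ℓ ≤ k then p ℓ else 0)
            (1 - ∑' ℓ : ℤ, if ℓ ≤ k then p ℓ else 0) / p (k + 1)) :=
            mul_le_mul_of_nonneg_left (hfb k hpk1) (div_nonneg (abs_nonneg _) hpk.le)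
        _ = |(p (k + 1) - p k) * min (∑' ℓ : ℤ, if ℓ ≤ k then p ℓ else 0)
            (1 - ∑' ℓ : ℤ, if ℓ ≤ k then p ℓ else 0) / (p k * p (k + 1))| := by
            rw [abs_div, abs_mul, abs_of_nonneg (hmin0 k),
              abs_of_nonneg (mul_nonneg hpk.le hpk1.le)]
            ring
    · have hp0 : p (k + 1) = 0 := by
        rcases (hnonneg (k + 1)).eq_or_lt with h | h
        · exact h.symm
        · exact absurd ((hsupp (k + 1)).1 h).2 hR'
      have : f (k + 1) = 0 := by
        rw [hf (k + 1), hp0]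
        simp
      rw [this, mul_zero, abs_zero]
      exact le_max_right _ _
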